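/- Every nonempty long-edge graph G can be expressed in exactly one way as a multiset sum G = Γ_1 + Γ_2 + ⋯ + Γ_r of nonempty offset templates satisfying R(Γ_j) ≤ L(Γ_{j+1}) for all 1 ≤ j < r. That is, such a decomposition exists, and if Γ_1 + ⋯ + Γ_r = Γ'_1 + ⋯ + Γ'_s are two decompositions into nonempty offset templates with R(Γ_j) ≤ L(Γ_{j+1}) for all j < r and R(Γ'_j) ≤ L(Γ'_{j+1}) for all j < s, then r = s and Γ_j = Γ'_j for all j. -/

import Mathlib

/-- An edge `(a, b, w)` with `a < b` and `w ≥ 1` which is not short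
(i.e. not both `b = a + 1` and `w = 1`). -/
def IsLongEdge (e : ℕ × ℕ × ℕ) : Prop :=
  e.1 < e.2.1 ∧ 1 ≤ e.2.2 ∧ ¬ (e.2.1 = e.1 + 1 ∧ e.2.2 = 1)

/-- A long-edge graph: a finite multiset of edges, none of which is short. -/
def IsLongEdgeGraph (G : Multiset (ℕ × ℕ × ℕ)) : Prop :=
  ∀ e ∈ G, IsLongEdge e

/-- `L(G)`: the minimum left endpoint of an edge of `G`. -/
noncomputable def legL (G : Multiset (ℕ × ℕ × ℕ)) : ℕ :=
  sInf {n | ∃ e ∈ G, (e : ℕ × ℕ × ℕ).1 = n}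

/-- `R(G)`: the maximum right endpoint of an edge of `G`. -/
noncomputable def legR (G : Multiset (ℕ × ℕ × ℕ)) : ℕ :=
  sSup {n | ∃ e ∈ G, (e : ℕ × ℕ × ℕ).2.1 = n}

/-- The vertex `v` is covered by `G`. -/
def Covers (G : Multiset (ℕ × ℕ × ℕ)) (v : ℕ) : Prop :=
  ∃ e ∈ G, (e : ℕ × ℕ × ℕ).1 < v ∧ v < e.2.1

/-- A nonempty long-edge graph all of whose internal vertices are covered. -/
def IsOffsetTemplate (Γ : Multiset (ℕ × ℕ × ℕ)) : Prop :=
  IsLongEdgeGraph Γ ∧ Γ ≠ 0 ∧ ∀ v : ℕ, legL Γ < v → v < legR Γ → Covers Γ v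

namespace LEGaux

abbrev E := ℕ × ℕ × ℕ

lemma legL_le {G : Multiset E} {e : E} (he : e ∈ G) : legL G ≤ e.1 := by
  have h : e.1 ∈ {n | ∃ e ∈ G, (e : E).1 = n} := ⟨e, he, rfl⟩
  exact Nat.sInf_le h

lemma exists_legL {G : Multiset E} (hne : G ≠ 0) : ∃ e ∈ G, (e : E).1 = legL G := by
  obtain ⟨e, he⟩ := Multiset.exists_mem_of_ne_zero hne
  have h : e.1 ∈ {n | ∃ e ∈ G, (e : E).1 = n} := ⟨e, he, rfl⟩
  exact Nat.sInf_mem ⟨e.1, h⟩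

lemma bddR (G : Multiset E) : BddAbove {n | ∃ e ∈ G, (e : E).2.1 = n} := by
  have h : {n | ∃ e ∈ G, (e : E).2.1 = n} = (fun e : E => e.2.1) '' {e | e ∈ G} := by
    ext n; simp [Set.mem_image]
  rw [h]
  exact (Set.Finite.image _ G.finite_toSet).bddAbove

lemma le_legR {G : Multiset E} {e : E} (he : e ∈ G) : e.2.1 ≤ legR G := by
  have h : e.2.1 ∈ {n | ∃ e ∈ G, (e : E).2.1 = n} := ⟨e, he, rfl⟩
  exact le_csSup (bddR G) h

lemma exists_legR {G : Multiset E} (hne : G ≠ 0) : ∃ e ∈ G, (e : E).2.1 = legR G := by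
  obtain ⟨e, he⟩ := Multiset.exists_mem_of_ne_zero hne
  have h : e.2.1 ∈ {n | ∃ e ∈ G, (e : E).2.1 = n} := ⟨e, he, rfl⟩
  exact Nat.sSup_mem ⟨e.2.1, h⟩ (bddR G)

lemma legL_lt_legR {G : Multiset E} (hG : IsLongEdgeGraph G) (hne : G ≠ 0) :
    legL G < legR G := by
  obtain ⟨e, he, h1⟩ := exists_legL hne
  calc legL G = e.1 := h1.symm
    _ < e.2.1 := (hG e he).1
    _ ≤ legR G := le_legR he

/-- The set of cut points strictly to the right of `legL G`. -/
def cutSet (G : Multiset E) : Set ℕ :=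
  {n | legL G < n ∧ ∀ e ∈ G, (e : E).2.1 ≤ n ∨ n ≤ e.1}

noncomputable def cutP (G : Multiset E) : ℕ := sInf (cutSet G)

lemma cutSet_nonempty {G : Multiset E} (hG : IsLongEdgeGraph G) (hne : G ≠ 0) :
    (cutSet G).Nonempty :=
  ⟨legR G, legL_lt_legR hG hne, fun e he => Or.inl (le_legR he)⟩

lemma cutP_mem {G : Multiset E} (hG : IsLongEdgeGraph G) (hne : G ≠ 0) :
    cutP G ∈ cutSet G :=
  Nat.sInf_mem (cutSet_nonempty hG hne)

lemma covers_of_lt_cutP {G : Multiset E} {v : ℕ}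
    (h1 : legL G < v) (h2 : v < cutP G) : Covers G v := by
  by_contra h
  have hv : v ∈ cutSet G := by
    refine ⟨h1, fun e he => ?_⟩
    by_contra hc
    push_neg at hc
    exact h ⟨e, he, by omega, by omega⟩
  exact absurd h2 (not_lt.2 (Nat.sInf_le hv))

/-- The canonical first block. -/
noncomputable def headPart (G : Multiset E) : Multiset E :=
  G.filter (fun e => e.1 < cutP G)

/-- The rest. -/
noncomputable def tailPart (G : Multiset E) : Multiset E :=
  G.filter (fun e => ¬ e.1 < cutP G)

lemma head_add_tail (G : Multiset E) : headPart G + tailPart G = G :=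
  Multiset.filter_add_not _ _

lemma headPart_le (G : Multiset E) : headPart G ≤ G := Multiset.filter_le _ _

lemma mem_headPart {G : Multiset E} {e : E} :
    e ∈ headPart G ↔ e ∈ G ∧ e.1 < cutP G := Multiset.mem_filter

lemma mem_tailPart {G : Multiset E} {e : E} :
    e ∈ tailPart G ↔ e ∈ G ∧ cutP G ≤ e.1 := by
  rw [tailPart, Multiset.mem_filter]
  constructor <;> rintro ⟨h1, h2⟩ <;> exact ⟨h1, by omega⟩

lemma headPart_ne_zero {G : Multiset E} (hG : IsLongEdgeGraph G) (hne : G ≠ 0) :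
    headPart G ≠ 0 := by
  obtain ⟨e, he, h1⟩ := exists_legL hne
  have hc := (cutP_mem hG hne).1
  have : e ∈ headPart G := mem_headPart.2 ⟨he, by omega⟩
  exact fun h0 => by simp [h0] at this

lemma legL_headPart {G : Multiset E} (hG : IsLongEdgeGraph G) (hne : G ≠ 0) :
    legL (headPart G) = legL G := by
  obtain ⟨e, he, h1⟩ := exists_legL hne
  have hc := (cutP_mem hG hne).1
  have hmem : e ∈ headPart G := mem_headPart.2 ⟨he, by omega⟩
  refine le_antisymm (by rw [← h1]; exact legL_le hmem) ?_
  obtain ⟨f, hf, h2⟩ := exists_legL (headPart_ne_zero hG hne)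
  rw [← h2]
  exact legL_le (Multiset.mem_of_le (headPart_le G) hf)

lemma headPart_b_le {G : Multiset E} (hG : IsLongEdgeGraph G) (hne : G ≠ 0)
    {e : E} (he : e ∈ headPart G) : e.2.1 ≤ cutP G := by
  obtain ⟨heG, ha⟩ := mem_headPart.1 he
  rcases (cutP_mem hG hne).2 e heG with h | h
  · exact h
  · omega

lemma legR_headPart_le {G : Multiset E} (hG : IsLongEdgeGraph G) (hne : G ≠ 0) :
    legR (headPart G) ≤ cutP G := by
  obtain ⟨e, he, h⟩ := exists_legR (headPart_ne_zero hG hne)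
  rw [← h]; exact headPart_b_le hG hne he

lemma isLongEdgeGraph_of_le {G H : Multiset E} (hG : IsLongEdgeGraph G)
    (h : H ≤ G) : IsLongEdgeGraph H :=
  fun e he => hG e (Multiset.mem_of_le h he)

lemma headPart_template {G : Multiset E} (hG : IsLongEdgeGraph G) (hne : G ≠ 0) :
    IsOffsetTemplate (headPart G) := by
  refine ⟨isLongEdgeGraph_of_le hG (headPart_le G), headPart_ne_zero hG hne, ?_⟩
  intro v hv1 hv2
  rw [legL_headPart hG hne] at hv1
  have hv3 : v < cutP G := lt_of_lt_of_le hv2 (legR_headPart_le hG hne)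
  obtain ⟨e, he, h1, h2⟩ := covers_of_lt_cutP hv1 hv3
  exact ⟨e, mem_headPart.2 ⟨he, by omega⟩, h1, h2⟩

lemma legL_tailPart {G : Multiset E} (hT : tailPart G ≠ 0) :
    cutP G ≤ legL (tailPart G) := by
  obtain ⟨e, he, h⟩ := exists_legL hT
  rw [← h]
  exact (mem_tailPart.1 he).2

lemma nil_of_sum_zero {l : List (Multiset E)} (h0 : ∀ Γ ∈ l, Γ ≠ 0)
    (hs : l.sum = 0) : l = [] := by
  cases l with
  | nil => rfl
  | cons Γ t =>
      exfalso
      apply h0 Γ (by simp)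
      have : Γ ≤ (Γ :: t).sum := by
        rw [List.sum_cons]; exact Multiset.le_add_right _ _
      rw [hs] at this
      exact Multiset.le_zero.1 this

/-- Every edge in the sum of the tail of a chain lies to the right of `legR Γ`. -/
lemma chain_sum_right :
    ∀ (t : List (Multiset E)) (Γ : Multiset E),
      (∀ Γ' ∈ t, IsOffsetTemplate Γ') →
      List.Chain (fun x y => legR x ≤ legL y) Γ t →
      ∀ e ∈ t.sum, legR Γ ≤ (e : E).1 := by
  intro t
  induction t with
  | nil => intro Γ _ _ e he; simp at he
  | cons Γ' t' ih =>
      intro Γ htp hch e he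
      rw [List.sum_cons, Multiset.mem_add] at he
      have hr : legR Γ ≤ legL Γ' := (List.chain_cons.1 hch).1
      rcases he with he | he
      · exact le_trans hr (legL_le he)
      · have htp' := htp Γ' (by simp)
        have h2 : legR Γ' ≤ e.1 :=
          ih Γ' (fun x hx => htp x (by simp [hx])) (List.chain_cons.1 hch).2 e he
        have h3 : legL Γ' < legR Γ' := legL_lt_legR htp'.1 htp'.2.1
        omega

def Valid (l : List (Multiset E)) (G : Multiset E) : Prop :=
  (∀ Γ ∈ l, IsOffsetTemplate Γ) ∧ l.sum = G ∧
    l.Chain' (fun Γ Γ' => legR Γ ≤ legL Γ')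

/-- The head of any valid decomposition is the canonical head part. -/
lemma head_char {G : Multiset E} (hG : IsLongEdgeGraph G) (hne : G ≠ 0)
    {Γ : Multiset E} {t : List (Multiset E)} (hv : Valid (Γ :: t) G) :
    Γ = headPart G ∧ t.sum = tailPart G := by
  obtain ⟨htp, hsum, hch⟩ := hv
  have hΓtp : IsOffsetTemplate Γ := htp Γ (by simp)
  have hsum' : Γ + t.sum = G := by rw [← hsum, List.sum_cons]
  have hΓle : Γ ≤ G := by rw [← hsum']; exact Multiset.le_add_right _ _
  have htle : t.sum ≤ G := by rw [← hsum']; exact Multiset.le_add_left _ _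
  have hright : ∀ e ∈ t.sum, legR Γ ≤ (e : E).1 :=
    chain_sum_right t Γ (fun x hx => htp x (by simp [hx])) hch
  -- legL Γ = legL G
  have hLge : legL G ≤ legL Γ := by
    obtain ⟨e, he, h⟩ := exists_legL hΓtp.2.1
    rw [← h]; exact legL_le (Multiset.mem_of_le hΓle he)
  have hLR : legL Γ < legR Γ := legL_lt_legR hΓtp.1 hΓtp.2.1
  have hLeq : legL Γ = legL G := by
    refine le_antisymm ?_ hLge
    obtain ⟨e, he, h⟩ := exists_legL hne
    rw [← hsum', Multiset.mem_add] at he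
    rcases he with he | he
    · rw [← h]; exact legL_le he
    · have := hright e he; omega
  -- legR Γ is a cut
  have hcut : legR Γ ∈ cutSet G := by
    refine ⟨by omega, fun e he => ?_⟩
    rw [← hsum', Multiset.mem_add] at he
    rcases he with he | he
    · exact Or.inl (le_legR he)
    · exact Or.inr (hright e he)
  have hcle : cutP G ≤ legR Γ := Nat.sInf_le hcut
  have hceq : legR Γ = cutP G := by
    refine le_antisymm ?_ hcle
    by_contra hlt
    push_neg at hlt
    have hc := cutP_mem hG hne
    have hc1 : legL G < cutP G := hc.1
    have hcov : Covers Γ (cutP G) := hΓtp.2.2 _ (by omega) hlt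
    obtain ⟨e, he, h1, h2⟩ := hcov
    rcases hc.2 e (Multiset.mem_of_le hΓle he) with h | h <;> omega
  -- Γ = headPart G
  have hΓeq : Γ = headPart G := by
    have : headPart G = Multiset.filter (fun e => e.1 < cutP G) Γ
        + Multiset.filter (fun e => e.1 < cutP G) t.sum := by
      rw [headPart, ← hsum', Multiset.filter_add]
    rw [this, Multiset.filter_eq_self.2, Multiset.filter_eq_nil.2, add_zero]
    · intro e he
      have := hright e he
      omega
    · intro e he
      have h1 : e.1 < e.2.1 := (hΓtp.1 e he).1
      have h2 : e.2.1 ≤ legR Γ := le_legR he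
      omega
  refine ⟨hΓeq, ?_⟩
  have : Γ + t.sum = headPart G + tailPart G := by rw [hsum', head_add_tail]
  rw [hΓeq] at this
  exact add_left_cancel this

lemma card_tail_lt {G : Multiset E} (hG : IsLongEdgeGraph G) (hne : G ≠ 0) :
    Multiset.card (tailPart G) < Multiset.card G := by
  have h := head_add_tail G
  have h1 : Multiset.card (headPart G) + Multiset.card (tailPart G)
      = Multiset.card G := by rw [← Multiset.card_add, h]
  have h2 : 0 < Multiset.card (headPart G) :=
    Multiset.card_pos.2 (headPart_ne_zero hG hne)
  omega

lemma exists_valid :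
    ∀ n (G : Multiset E), Multiset.card G ≤ n → IsLongEdgeGraph G → G ≠ 0 →
      ∃ l : List (Multiset E), Valid l G ∧ ∀ Γ ∈ l, legL G ≤ legL Γ := by
  intro n
  induction n with
  | zero =>
      intro G hcard _ hne
      exact absurd (Multiset.card_eq_zero.1 (Nat.le_zero.1 hcard)) hne
  | succ n ih =>
      intro G hcard hG hne
      have hA := headPart_template hG hne
      by_cases hB : tailPart G = 0
      · refine ⟨[headPart G], ⟨?_, ?_, ?_⟩, ?_⟩
        · intro Γ hΓ; simp at hΓ; subst hΓ; exact hA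
        · rw [List.sum_singleton]
          conv_rhs => rw [← head_add_tail G]
          rw [hB, add_zero]
        · exact List.isChain_singleton _
        · intro Γ hΓ; simp at hΓ; subst hΓ
          rw [legL_headPart hG hne]
      · have hcardB : Multiset.card (tailPart G) ≤ n := by
          have := card_tail_lt hG hne; omega
        have hBleg : IsLongEdgeGraph (tailPart G) :=
          isLongEdgeGraph_of_le hG (Multiset.filter_le _ _)
        obtain ⟨l', ⟨htp', hsum', hch'⟩, hleg'⟩ := ih (tailPart G) hcardB hBleg hB
        have hlne : l' ≠ [] := by
          intro h; rw [h] at hsum'; exact hB hsum'.symm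
        have hcGle : legL G < cutP G := (cutP_mem hG hne).1
        have hBc : cutP G ≤ legL (tailPart G) := legL_tailPart hB
        refine ⟨headPart G :: l', ⟨?_, ?_, ?_⟩, ?_⟩
        · intro Γ hΓ
          rcases List.mem_cons.1 hΓ with h | h
          · subst h; exact hA
          · exact htp' Γ h
        · rw [List.sum_cons, hsum', head_add_tail]
        · apply List.isChain_cons.mpr
          refine ⟨?_, hch'⟩
          intro y hy
          have hy' : y ∈ l' := List.mem_of_mem_head? hy
          have := hleg' y hy'
          have := legR_headPart_le hG hne
          omega
        · intro Γ hΓ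
          rcases List.mem_cons.1 hΓ with h | h
          · subst h; rw [legL_headPart hG hne]
          · have := hleg' Γ h; omega

lemma unique_valid :
    ∀ n (G : Multiset E), Multiset.card G ≤ n → IsLongEdgeGraph G →
      ∀ l l' : List (Multiset E), Valid l G → Valid l' G → l = l' := by
  intro n
  induction n with
  | zero =>
      intro G hcard _ l l' hv hv'
      have hG0 : G = 0 := Multiset.card_eq_zero.1 (Nat.le_zero.1 hcard)
      subst hG0
      rw [nil_of_sum_zero (fun Γ hΓ => (hv.1 Γ hΓ).2.1) hv.2.1,
        nil_of_sum_zero (fun Γ hΓ => (hv'.1 Γ hΓ).2.1) hv'.2.1]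
  | succ n ih =>
      intro G hcard hG l l' hv hv'
      by_cases hne : G = 0
      · subst hne
        rw [nil_of_sum_zero (fun Γ hΓ => (hv.1 Γ hΓ).2.1) hv.2.1,
          nil_of_sum_zero (fun Γ hΓ => (hv'.1 Γ hΓ).2.1) hv'.2.1]
      · cases l with
        | nil => exact absurd hv.2.1.symm hne
        | cons Γ t =>
          cases l' with
          | nil => exact absurd hv'.2.1.symm hne
          | cons Γ' t' =>
            obtain ⟨h1, h2⟩ := head_char hG hne hv
            obtain ⟨h1', h2'⟩ := head_char hG hne hv'
            have hteq : t = t' := by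
              have hcardB : Multiset.card (tailPart G) ≤ n := by
                have := card_tail_lt hG hne; omega
              have hBleg : IsLongEdgeGraph (tailPart G) :=
                isLongEdgeGraph_of_le hG (Multiset.filter_le _ _)
              refine ih (tailPart G) hcardB hBleg t t' ?_ ?_
              · exact ⟨fun x hx => hv.1 x (by simp [hx]), h2, (hv.2.2).tail⟩
              · exact ⟨fun x hx => hv'.1 x (by simp [hx]), h2', (hv'.2.2).tail⟩
            rw [h1, h1', hteq]

end LEGaux

theorem longEdgeGraph_unique_decomposition (G : Multiset (ℕ × ℕ × ℕ))
    (hG : IsLongEdgeGraph G) (hne : G ≠ 0) :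
    ∃! l : List (Multiset (ℕ × ℕ × ℕ)),
      (∀ Γ ∈ l, IsOffsetTemplate Γ) ∧ l.sum = G ∧
        l.Chain' (fun Γ Γ' => legR Γ ≤ legL Γ') := by
  obtain ⟨l, hv, -⟩ := LEGaux.exists_valid (Multiset.card G) G le_rfl hG hne
  refine ⟨l, ⟨hv.1, hv.2.1, hv.2.2⟩, fun l' hl' => ?_⟩
  exact LEGaux.unique_valid (Multiset.card G) G le_rfl hG l' l
    ⟨hl'.1, hl'.2.1, hl'.2.2⟩ hv
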